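/- Let G be a graph on n vertices, A ∈ S(G), B ∈ S(complement of G) with AB = O. Then for each index i, a_ii = 0 or b_ii = 0. -/
import Mathlib


/-- `A ∈ S(G)`: real symmetric matrix whose off-diagonal nonzero pattern is `E(G)`. -/
def MatIn {V : Type*} [Fintype V] (G : SimpleGraph V) (A : Matrix V V ℝ) : Prop :=
  A.IsSymm ∧ ∀ i j : V, i ≠ j → (A i j ≠ 0 ↔ G.Adj i j)

/-- `G` is complementary vanishing. -/
def CompVan {V : Type*} [Fintype V] (G : SimpleGraph V) : Prop :=
  ∃ A B : Matrix V V ℝ, MatIn G A ∧ MatIn Gᶜ B ∧ A * B = 0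

theorem stmt_1 {n : ℕ} (G : SimpleGraph (Fin n)) (A B : Matrix (Fin n) (Fin n) ℝ)
    (hA : MatIn G A) (hB : MatIn Gᶜ B) (hAB : A * B = 0) (i : Fin n) :
    A i i = 0 ∨ B i i = 0 := by
  have h0 : (A * B) i i = 0 := by rw [hAB]; rfl
  rw [Matrix.mul_apply] at h0
  have hsum : ∑ k, A i k * B k i = A i i * B i i := by
    apply Finset.sum_eq_single
    · intro k _ hk
      by_cases hadj : G.Adj i k
      · have : ¬ Gᶜ.Adj k i := by
          simp [SimpleGraph.compl_adj]
          intro _; exact hadj.symm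
        have hb : B k i = 0 := by
          by_contra hne
          exact this ((hB.2 k i hk).mp hne)
        simp [hb]
      · have ha : A i k = 0 := by
          by_contra hne
          exact hadj ((hA.2 i k (Ne.symm hk)).mp hne)
        simp [ha]
    · intro h; exact absurd (Finset.mem_univ i) h
  rw [hsum] at h0
  exact mul_eq_zero.mp h0
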